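/- The 4-dimensional complex algebra L⁴₀₉ with basis e₁,e₂,e₃,e₄ and nonzero products e₁e₂ = e₃, e₁e₃ = -2e₄, e₂e₁ = -e₃, e₃e₁ = e₄ is a nilpotent left-symmetric algebra that is not a Novikov algebra. -/
import Mathlib


/-- Span of the set of products of an element of `S` with an element of `T`. -/
def mulSpan {V : Type*} [AddCommGroup V] [Module ℂ V] (mul : V → V → V)
    (S T : Submodule ℂ V) : Submodule ℂ V :=
  Submodule.span ℂ {z | ∃ x ∈ S, ∃ y ∈ T, z = mul x y}

/-- `piece mul n` is the span of all products of `n + 1` elements of the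
algebra `(V, mul)`, with all possible bracketings. -/
def piece {V : Type*} [AddCommGroup V] [Module ℂ V] (mul : V → V → V) : ℕ → Submodule ℂ V
  | 0 => ⊤
  | n + 1 => ⨆ i : Fin (n + 1), mulSpan mul (piece mul i.1) (piece mul (n - i.1))

/-- An algebra is nilpotent if some power (with all bracketings) is zero. -/
def IsNilpotentMul {V : Type*} [AddCommGroup V] [Module ℂ V] (mul : V → V → V) : Prop :=
  ∃ n : ℕ, piece mul n = ⊥

/-- Multiplication of the algebra `L⁴₀₉`: on the basis `e₁, e₂, e₃, e₄`
(indexed `0,…,3`) the nonzero products are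
`e₁e₂ = e₃`, `e₁e₃ = -2e₄`, `e₂e₁ = -e₃`, `e₃e₁ = e₄`. -/
def mulL409 (x y : Fin 4 → ℂ) : Fin 4 → ℂ :=
  ![0, 0, x 0 * y 1 - x 1 * y 0, -2 * (x 0 * y 2) + x 2 * y 0]

noncomputable def S1 : Submodule ℂ (Fin 4 → ℂ) :=
  LinearMap.ker (LinearMap.proj 0 : (Fin 4 → ℂ) →ₗ[ℂ] ℂ) ⊓
  LinearMap.ker (LinearMap.proj 1 : (Fin 4 → ℂ) →ₗ[ℂ] ℂ)

noncomputable def S2 : Submodule ℂ (Fin 4 → ℂ) :=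
  S1 ⊓ LinearMap.ker (LinearMap.proj 2 : (Fin 4 → ℂ) →ₗ[ℂ] ℂ)

lemma mem_S1 {v : Fin 4 → ℂ} : v ∈ S1 ↔ v 0 = 0 ∧ v 1 = 0 := by
  simp [S1, LinearMap.mem_ker]

lemma mem_S2 {v : Fin 4 → ℂ} : v ∈ S2 ↔ (v 0 = 0 ∧ v 1 = 0) ∧ v 2 = 0 := by
  simp [S2, mem_S1, LinearMap.mem_ker]

lemma mulSpan_le_S1 (S T : Submodule ℂ (Fin 4 → ℂ)) : mulSpan mulL409 S T ≤ S1 := by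
  rw [mulSpan, Submodule.span_le]
  rintro z ⟨x, hx, y, hy, rfl⟩
  rw [SetLike.mem_coe, mem_S1]
  simp [mulL409]

lemma piece1_le : piece mulL409 1 ≤ S1 := by
  rw [piece]
  exact iSup_le fun i => mulSpan_le_S1 _ _

lemma mulSpan_left_S1_le (S T : Submodule ℂ (Fin 4 → ℂ)) (hS : S ≤ S1) :
    mulSpan mulL409 S T ≤ S2 := by
  rw [mulSpan, Submodule.span_le]
  rintro z ⟨x, hx, y, hy, rfl⟩
  have h := mem_S1.1 (hS hx)
  rw [SetLike.mem_coe, mem_S2]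
  simp [mulL409, h.1, h.2]

lemma mulSpan_right_S1_le (S T : Submodule ℂ (Fin 4 → ℂ)) (hT : T ≤ S1) :
    mulSpan mulL409 S T ≤ S2 := by
  rw [mulSpan, Submodule.span_le]
  rintro z ⟨x, hx, y, hy, rfl⟩
  have h := mem_S1.1 (hT hy)
  rw [SetLike.mem_coe, mem_S2]
  simp [mulL409, h.1, h.2]

lemma piece2_le : piece mulL409 2 ≤ S2 := by
  rw [piece]
  apply iSup_le
  intro i
  fin_cases i
  · exact mulSpan_right_S1_le _ _ piece1_le
  · exact mulSpan_left_S1_le _ _ piece1_le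

lemma piece3_eq : piece mulL409 3 = ⊥ := by
  rw [le_bot_iff.symm, piece]
  apply iSup_le
  intro i
  fin_cases i
  all_goals {
    rw [mulSpan, Submodule.span_le]
    rintro z ⟨x, hx, y, hy, rfl⟩
    simp only [SetLike.mem_coe, Submodule.mem_bot]
    first
    | (have h := mem_S2.1 (piece2_le hy)
       funext j; fin_cases j <;> simp [mulL409, h.1.1, h.1.2, h.2])
    | (have h1 := mem_S1.1 (piece1_le hx)
       have h2 := mem_S1.1 (piece1_le hy)
       funext j; fin_cases j <;> simp [mulL409, h1.1, h1.2, h2.1, h2.2])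
    | (have h := mem_S2.1 (piece2_le hx)
       funext j; fin_cases j <;> simp [mulL409, h.1.1, h.1.2, h.2])
  }

/-- `L⁴₀₉` is a nilpotent left-symmetric algebra that is not a
Novikov algebra. -/
theorem L409_nilpotent_leftSymmetric_not_novikov :
    (∀ x y z : Fin 4 → ℂ,
      mulL409 (mulL409 x y) z - mulL409 x (mulL409 y z) =
      mulL409 (mulL409 y x) z - mulL409 y (mulL409 x z)) ∧
    IsNilpotentMul mulL409 ∧
    ¬ (∀ x y z : Fin 4 → ℂ, mulL409 (mulL409 x y) z = mulL409 (mulL409 x z) y) := by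
  refine ⟨fun x y z => ?_, ⟨3, piece3_eq⟩, fun h => ?_⟩
  · funext i; fin_cases i <;> simp [mulL409] <;> ring
  · have := congrFun (h ![1,0,0,0] ![0,1,0,0] ![1,0,0,0]) 3
    simp [mulL409] at this
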